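/- Ergodic telescoping bound for the inexact Bregman proximal point method: suppose for each k, ⟨wᵏ, pᵏ − z⟩ ≤ (1/σₖ)(D_Φ(z, zᵏ) − D_Φ(z, z^{k+1}) − (1−ρₖ)D_Φ(pᵏ, zᵏ)) with ρₖ < 1, and let p̆ᴷ = (∑_{k=0}^K σₖ pᵏ)/(∑_{k=0}^K σₖ). Then for every z ∈ dom T ∩ dom Φ and every w ∈ T(z), monotonicity of T yields ⟨w, p̆ᴷ − z⟩ ≤ D_Φ(z, z⁰)/(∑_{k=0}^K σₖ). -/

import Mathlib

open scoped RealInnerProductSpace BigOperators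

/-- Bregman distance generated by `Φ` with gradient map `g`. -/
noncomputable def bregman {E : Type*} [NormedAddCommGroup E] [InnerProductSpace ℝ E]
    (Φ : E → ℝ) (g : E → E) (x y : E) : ℝ :=
  Φ x - Φ y - ⟪g y, x - y⟫

/-- A set-valued operator `T : E ⇉ E` is monotone. -/
def MonotoneOp {E : Type*} [NormedAddCommGroup E] [InnerProductSpace ℝ E]
    (T : E → Set E) : Prop :=
  ∀ ⦃x y x' y' : E⦄, x' ∈ T x → y' ∈ T y → 0 ≤ ⟪x - y, x' - y'⟫

/-- Ergodic telescoping bound for the inexact Bregman proximal point method: if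
for each `k` and every `z ∈ dom Φ` we have
`⟨wᵏ, pᵏ − z⟩ ≤ (1/σₖ)(D_Φ(z, zᵏ) − D_Φ(z, z^{k+1}) − (1−ρₖ)D_Φ(pᵏ, zᵏ))` with
`ρₖ < 1`, then for the ergodic iterate `p̆ᴷ = (∑_{k≤K} σₖ pᵏ)/(∑_{k≤K} σₖ)`,
every `z ∈ dom T ∩ dom Φ` and every `w ∈ T z` satisfy
`⟨w, p̆ᴷ − z⟩ ≤ D_Φ(z, z⁰)/(∑_{k≤K} σₖ)` by monotonicity of `T`. -/
theorem stmt14 {E : Type*} [NormedAddCommGroup E] [InnerProductSpace ℝ E]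
    (Φ : E → ℝ) (g : E → E)
    (hDnn : ∀ u v : E, 0 ≤ bregman Φ g u v)
    (T : E → Set E) (hT : MonotoneOp T) (SΦ : Set E)
    (z p w : ℕ → E) (σ ρ : ℕ → ℝ) (hσ : ∀ k, 0 < σ k) (hρ : ∀ k, ρ k < 1)
    (hw : ∀ k, w k ∈ T (p k))
    (hstep : ∀ zz ∈ SΦ, ∀ k : ℕ,
      ⟪w k, p k - zz⟫ ≤ (1 / σ k) *
        (bregman Φ g zz (z k) - bregman Φ g zz (z (k + 1)) -
          (1 - ρ k) * bregman Φ g (p k) (z k)))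
    (K : ℕ) :
    ∀ zz ∈ SΦ, ∀ wz ∈ T zz,
      ⟪wz, (∑ k ∈ Finset.range (K + 1), σ k)⁻¹ •
          (∑ k ∈ Finset.range (K + 1), σ k • p k) - zz⟫ ≤
        bregman Φ g zz (z 0) / ∑ k ∈ Finset.range (K + 1), σ k := by
  intro zz hzz wz hwz
  set S := ∑ k ∈ Finset.range (K + 1), σ k with hSdef
  have hS : 0 < S := Finset.sum_pos (fun k _ => hσ k) ⟨0, Finset.mem_range.mpr (Nat.succ_pos K)⟩
  have key : ∀ k, σ k * ⟪wz, p k - zz⟫ ≤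
      bregman Φ g zz (z k) - bregman Φ g zz (z (k + 1)) := by
    intro k
    have hmono := hT (hw k) hwz
    rw [inner_sub_right] at hmono
    have h1 : ⟪wz, p k - zz⟫ ≤ ⟪w k, p k - zz⟫ := by
      have e1 := real_inner_comm (p k - zz) wz
      have e2 := real_inner_comm (p k - zz) (w k)
      linarith
    have h2 := hstep zz hzz k
    have hσk := hσ k
    have hρnn : 0 ≤ (1 - ρ k) * bregman Φ g (p k) (z k) :=
      mul_nonneg (by linarith [hρ k]) (hDnn _ _)
    have h3 := mul_le_mul_of_nonneg_left (h1.trans h2) hσk.le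
    have hX : σ k * ((1 / σ k) * (bregman Φ g zz (z k) - bregman Φ g zz (z (k + 1)) -
        (1 - ρ k) * bregman Φ g (p k) (z k))) =
        bregman Φ g zz (z k) - bregman Φ g zz (z (k + 1)) -
        (1 - ρ k) * bregman Φ g (p k) (z k) := by
      field_simp
    rw [hX] at h3
    linarith
  have hsum : ∑ k ∈ Finset.range (K + 1), σ k * ⟪wz, p k - zz⟫ ≤
      bregman Φ g zz (z 0) := by
    calc ∑ k ∈ Finset.range (K + 1), σ k * ⟪wz, p k - zz⟫
        ≤ ∑ k ∈ Finset.range (K + 1),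
            (bregman Φ g zz (z k) - bregman Φ g zz (z (k + 1))) :=
          Finset.sum_le_sum fun k _ => key k
      _ = bregman Φ g zz (z 0) - bregman Φ g zz (z (K + 1)) :=
          Finset.sum_range_sub' (fun k => bregman Φ g zz (z k)) (K + 1)
      _ ≤ bregman Φ g zz (z 0) := by linarith [hDnn zz (z (K + 1))]
  have hrw : ⟪wz, S⁻¹ • (∑ k ∈ Finset.range (K + 1), σ k • p k) - zz⟫ =
      S⁻¹ * ∑ k ∈ Finset.range (K + 1), σ k * ⟪wz, p k - zz⟫ := by
    have hv : ∑ k ∈ Finset.range (K + 1), σ k • (p k - zz)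
        = (∑ k ∈ Finset.range (K + 1), σ k • p k) - S • zz := by
      simp only [smul_sub, Finset.sum_sub_distrib]
      rw [hSdef, ← Finset.sum_smul]
    have h : S⁻¹ • (∑ k ∈ Finset.range (K + 1), σ k • p k) - zz
        = S⁻¹ • ∑ k ∈ Finset.range (K + 1), σ k • (p k - zz) := by
      rw [hv, smul_sub, smul_smul, inv_mul_cancel₀ hS.ne', one_smul]
    rw [h, real_inner_smul_right, inner_sum]
    simp only [real_inner_smul_right]
  rw [hrw, div_eq_inv_mul]
  exact mul_le_mul_of_nonneg_left hsum (inv_nonneg.mpr hS.le)
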